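/- Let E₁,…,E_{m−1} be l × l real matrices with Eᵢᵀ = −Eᵢ, Eᵢ² = −I, and Eᵢ·Eⱼ = −Eⱼ·Eᵢ for i ≠ j; let α, β > 0 with α² + β² = 1; and let (u,v) ∈ V₂^{α,β}. Suppose y ∈ ℝˡ satisfies |y| = β, ⟨y,u⟩ = 0, ⟨y,v⟩ = 0, and ⟨y, Eᵢu⟩ = 0 for 1 ≤ i ≤ m−1. Then the curve δ(t) = (u, cos t·v + sin t·y) satisfies δ(t) ∈ V₂^{α,β} for all t ∈ ℝ and δ(0) = (u,v); moreover, the curve t ↦ ξ(δ(t)), where ξ(u,v) = (−(β/α)·u, (α/β)·v), has derivative at t = 0 equal to (α/β) times the derivative of δ at t = 0, and δ′(0) = (0, y). -/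

import Mathlib

open scoped RealInnerProductSpace

/-- The action of an `l × l` real matrix on `EuclideanSpace ℝ (Fin l)`. -/
noncomputable def matAct {l : ℕ} (A : Matrix (Fin l) (Fin l) ℝ)
    (u : EuclideanSpace ℝ (Fin l)) : EuclideanSpace ℝ (Fin l) :=
  (WithLp.equiv 2 (Fin l → ℝ)).symm (A.mulVec (WithLp.equiv 2 (Fin l → ℝ) u))

/-- Pinkall–Thorbergsson's deformed Clifford–Stiefel manifold `V₂^{α,β}`. -/
noncomputable def cliffordV2ab (l m : ℕ) (E : Fin (m - 1) → Matrix (Fin l) (Fin l) ℝ)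
    (α β : ℝ) : Set (EuclideanSpace ℝ (Fin l) × EuclideanSpace ℝ (Fin l)) :=
  {p | ‖p.1‖ = α ∧ ‖p.2‖ = β ∧ ⟪p.1, p.2⟫ = 0 ∧
    ∀ i : Fin (m - 1), ⟪matAct (E i) p.1, p.2⟫ = 0}

/-- The unit normal field `ξ(u,v) = (−(β/α)·u, (α/β)·v)` on `V₂^{α,β}`. -/
noncomputable def xiField {l : ℕ} (α β : ℝ)
    (p : EuclideanSpace ℝ (Fin l) × EuclideanSpace ℝ (Fin l)) :
    EuclideanSpace ℝ (Fin l) × EuclideanSpace ℝ (Fin l) :=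
  ((-(β / α)) • p.1, (α / β) • p.2)

/-- Let `E₁,…,E_{m−1}` be a Clifford system, `α, β > 0` with `α² + β² = 1`, and
`(u,v) ∈ V₂^{α,β}`.  Suppose `y ∈ ℝˡ` satisfies `|y| = β`, `⟨y,u⟩ = 0`, `⟨y,v⟩ = 0`,
and `⟨y, Eᵢu⟩ = 0` for all `i`.  Then the curve `δ(t) = (u, cos t·v + sin t·y)` lies in
`V₂^{α,β}`, passes through `(u,v)` at `t = 0`, and the curve `t ↦ ξ(δ(t))` has derivative
at `t = 0` equal to `(α/β)` times `δ′(0)`, where `δ′(0) = (0, y)`. -/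
theorem principal_curvature_neg_alpha_div_beta (l m : ℕ)
    (E : Fin (m - 1) → Matrix (Fin l) (Fin l) ℝ)
    (hskew : ∀ i, (E i).transpose = -(E i))
    (hsq : ∀ i, E i * E i = -1)
    (hanti : ∀ i j, i ≠ j → E i * E j = -(E j * E i))
    (α β : ℝ) (hα : 0 < α) (hβ : 0 < β) (hαβ : α ^ 2 + β ^ 2 = 1)
    (u v : EuclideanSpace ℝ (Fin l)) (huv : (u, v) ∈ cliffordV2ab l m E α β)
    (y : EuclideanSpace ℝ (Fin l)) (hy : ‖y‖ = β) (hyu : ⟪y, u⟫ = 0) (hyv : ⟪y, v⟫ = 0)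
    (hyE : ∀ i : Fin (m - 1), ⟪y, matAct (E i) u⟫ = 0) :
    (∀ t : ℝ, (u, Real.cos t • v + Real.sin t • y) ∈ cliffordV2ab l m E α β) ∧
    (u, (Real.cos (0:ℝ)) • v + (Real.sin (0:ℝ)) • y) = (u, v) ∧
    deriv (fun t : ℝ => xiField α β (u, Real.cos t • v + Real.sin t • y)) 0 =
      (α / β) • deriv (fun t : ℝ =>
        ((u, Real.cos t • v + Real.sin t • y) :
          EuclideanSpace ℝ (Fin l) × EuclideanSpace ℝ (Fin l))) 0 ∧
    deriv (fun t : ℝ =>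
        ((u, Real.cos t • v + Real.sin t • y) :
          EuclideanSpace ℝ (Fin l) × EuclideanSpace ℝ (Fin l))) 0 = (0, y) := by
  obtain ⟨hu, hv, huv', hE⟩ := huv
  simp only at hu hv huv' hE
  have hvy : ⟪v, y⟫ = 0 := by rw [real_inner_comm]; exact hyv
  -- the curve derivative
  have hder : HasDerivAt (fun t : ℝ =>
      ((u, Real.cos t • v + Real.sin t • y) :
        EuclideanSpace ℝ (Fin l) × EuclideanSpace ℝ (Fin l))) (0, y) 0 := by
    have h1 : HasDerivAt (fun t : ℝ => Real.cos t • v + Real.sin t • y)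
        ((-Real.sin 0) • v + Real.cos 0 • y) 0 :=
      ((Real.hasDerivAt_cos 0).smul_const v).add ((Real.hasDerivAt_sin 0).smul_const y)
    simpa using HasDerivAt.prodMk (hasDerivAt_const (0:ℝ)
      (u : EuclideanSpace ℝ (Fin l))) h1
  have hder' : HasDerivAt (fun t : ℝ =>
      xiField α β (u, Real.cos t • v + Real.sin t • y))
      (((0:EuclideanSpace ℝ (Fin l))), (α / β) • y) 0 := by
    have h1 : HasDerivAt (fun t : ℝ =>
        (α / β) • (Real.cos t • v + Real.sin t • y)) ((α / β) •
        ((-Real.sin 0) • v + Real.cos 0 • y)) 0 :=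
      (((Real.hasDerivAt_cos 0).smul_const v).add
        ((Real.hasDerivAt_sin 0).smul_const y)).const_smul (α / β)
    have := HasDerivAt.prodMk (hasDerivAt_const (0:ℝ)
      ((-(β / α)) • u : EuclideanSpace ℝ (Fin l))) h1
    simpa [xiField] using this
  refine ⟨?_, by simp, ?_, hder.deriv⟩
  · intro t
    refine ⟨hu, ?_, ?_, ?_⟩
    · have hsq' : ‖Real.cos t • v + Real.sin t • y‖ ^ 2 = β ^ 2 := by
        rw [norm_add_sq_real]
        rw [real_inner_smul_left, real_inner_smul_right, hvy,
          norm_smul, norm_smul, hv, hy]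
        simp [mul_pow, abs_mul_abs_self]
        ring_nf
        rw [mul_comm]
        nlinarith [Real.sin_sq_add_cos_sq t]
      have hnn := norm_nonneg (Real.cos t • v + Real.sin t • y)
      rw [← Real.sqrt_sq hβ.le, ← hsq', Real.sqrt_sq hnn]
    · have huy : ⟪u, y⟫ = (0:ℝ) := by rw [real_inner_comm]; exact hyu
      rw [inner_add_right, real_inner_smul_right, real_inner_smul_right, huv']
      simp [huy]
    · intro i
      have h2 : ⟪matAct (E i) u, y⟫ = (0:ℝ) := by rw [real_inner_comm]; exact hyE i
      rw [inner_add_right, real_inner_smul_right, real_inner_smul_right, hE i]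
      simp [h2]
  · rw [hder.deriv, hder'.deriv, Prod.smul_mk, smul_zero]
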